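/- If G is a finite simple graph with α∘(G) > 2, then χ_c(G) ≥ girth(G). -/

import Mathlib

open SimpleGraph

/-- A list of vertices forms a cycle of `G` (single edges count as cycles of length 2):
at least two vertices, no repetitions, and consecutive vertices (cyclically) adjacent. -/
def IsCycleList {V : Type*} (G : SimpleGraph V) (l : List V) : Prop :=
  2 ≤ l.length ∧ l.Nodup ∧
    ∀ i : Fin l.length,
      G.Adj (l.get i) (l.get ⟨((i : ℕ) + 1) % l.length, Nat.mod_lt _ i.pos⟩)

/-- A cycle of `G` is monotonic for a circular ordering `σ` of the vertices if, after a
suitable rotation, its vertices appear in increasing order of position, i.e. the vertices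
`u_1, …, u_k, u_1` of the cycle appear in this cyclic order in `σ`. -/
def IsMonotonicCycle {V : Type*} [Fintype V] (G : SimpleGraph V)
    (σ : V ≃ Fin (Fintype.card V)) (l : List V) : Prop :=
  IsCycleList G l ∧ ∃ r : ℕ, ((l.rotate r).map fun x => (σ x : ℕ)).Chain' (· < ·)

/-- The circular altitude of `G`: the largest `k` such that every circular ordering of
the vertices of `G` contains a monotonic cycle with at least `k` vertices. -/
noncomputable def circAltitude {V : Type*} [Fintype V] (G : SimpleGraph V) : ℕ :=
  sSup {k | ∀ σ : V ≃ Fin (Fintype.card V), ∃ l : List V,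
    IsMonotonicCycle G σ l ∧ k ≤ l.length}

/-- A `(p,q)`-colouring of `G`: a map `c : V(G) → {1, …, p}` (encoded as `Fin p`) such
that `q ≤ |c u − c v| ≤ p − q` for every edge `uv` of `G`. -/
def IsPQColoring {V : Type*} (G : SimpleGraph V) (p q : ℕ) (c : V → Fin p) : Prop :=
  ∀ a b : V, G.Adj a b →
    (q : ℤ) ≤ |((c a : ℕ) : ℤ) - ((c b : ℕ) : ℤ)| ∧
      |((c a : ℕ) : ℤ) - ((c b : ℕ) : ℤ)| ≤ (p : ℤ) - (q : ℤ)

/-- The circular chromatic number `χ_c(G)`: the infimum of `p / q` over all pairs of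
positive integers `(p, q)` for which `G` admits a `(p,q)`-colouring. -/
noncomputable def circChromNum {V : Type*} [Fintype V] (G : SimpleGraph V) : ℝ :=
  sInf {x : ℝ | ∃ p q : ℕ, 0 < p ∧ 0 < q ∧ x = (p : ℝ) / (q : ℝ) ∧
    ∃ c : V → Fin p, IsPQColoring G p q c}

/- ### Auxiliary lemmas -/

/-- From a chain of adjacencies we can build a walk whose support is the given list. -/
lemma CircAux.exists_walk {V : Type*} (G : SimpleGraph V) :
    ∀ (t : List V) (a : V), List.Chain G.Adj a t →
      ∃ w : G.Walk a ((a :: t).getLast (List.cons_ne_nil a t)), w.support = a :: t := by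
  intro t
  induction t with
  | nil => intro a _; exact ⟨Walk.nil, by simp⟩
  | cons b t' ih =>
    intro a hch
    simp only [List.Chain, List.chain_cons] at hch
    obtain ⟨w', hw'⟩ := ih b hch.2
    rw [List.getLast_cons (List.cons_ne_nil b t')]
    exact ⟨Walk.cons hch.1 w', by simp [hw']⟩

lemma CircAux.cycleList_chain' {V : Type*} {G : SimpleGraph V} {l : List V}
    (hc : IsCycleList G l) : List.Chain' G.Adj l := by
  obtain ⟨h2, hnd, hadj⟩ := hc
  simp only [List.Chain', List.isChain_iff_getElem]
  intro i hi
  have hlt : i + 1 < l.length := by omega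
  have := hadj ⟨i, by omega⟩
  simpa [Nat.mod_eq_of_lt hlt] using this

lemma CircAux.cycleList_last_adj {V : Type*} {G : SimpleGraph V} {l : List V}
    (hc : IsCycleList G l) (hne : l ≠ []) : G.Adj (l.getLast hne) (l.head hne) := by
  obtain ⟨h2, hnd, hadj⟩ := hc
  have hn : 0 < l.length := by omega
  have := hadj ⟨l.length - 1, by omega⟩
  have h1 : (l.length - 1 + 1) % l.length = 0 := by
    have : l.length - 1 + 1 = l.length := by omega
    simp [this]
  simp only [List.get_eq_getElem, h1] at this
  rw [List.getLast_eq_getElem]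
  rw [List.getElem_zero hn] at this
  exact this

lemma CircAux.not_mem_edges_aux {V : Type*} {G : SimpleGraph V} {a b z : V} {t' : List V}
    (w : G.Walk a z) (hw : w.support = a :: b :: t') (hnd : (a :: b :: t').Nodup)
    (hza : z ≠ a) (hzb : z ≠ b) : s(z, a) ∉ w.edges := by
  intro hmem
  have hna : a ∉ b :: t' := by
    rw [List.nodup_cons] at hnd; exact hnd.1
  cases w with
  | nil => simp at hmem
  | cons ha2 w2 =>
    rename_i x
    have hw2 : w2.support = b :: t' := by simpa using hw
    have hx : x = b := by
      have h1 := w2.support_eq_cons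
      rw [hw2] at h1
      exact ((List.cons.injEq _ _ _ _ ▸ h1).1).symm
    subst hx
    rw [Walk.edges_cons] at hmem
    rcases List.mem_cons.mp hmem with heq | hmem2
    · rw [Sym2.eq_iff] at heq
      rcases heq with ⟨h1, h2⟩ | ⟨h1, h2⟩
      · exact hza h1
      · exact hzb h1
    · have : a ∈ w2.support := w2.snd_mem_support_of_mem_edges hmem2
      rw [hw2] at this
      exact hna this

/-- A cycle list of length at least three yields an upper bound on the girth. -/
lemma CircAux.egirth_le_of_cycleList {V : Type*} (G : SimpleGraph V) (l : List V)
    (hc : IsCycleList G l) (h3 : 3 ≤ l.length) : G.egirth ≤ (l.length : ℕ∞) := by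
  have hnd := hc.2.1
  have hch := CircAux.cycleList_chain' hc
  have hlastadj := CircAux.cycleList_last_adj hc
  rcases l with - | ⟨a, t⟩
  · simp at h3
  rcases t with - | ⟨b, t'⟩
  · simp at h3
  have hchain : List.Chain G.Adj a (b :: t') := hch
  obtain ⟨w, hw⟩ := CircAux.exists_walk G (b :: t') a hchain
  have hlast : G.Adj ((a :: b :: t').getLast (List.cons_ne_nil _ _)) a := by
    simpa using hlastadj (List.cons_ne_nil _ _)
  have hpath : w.IsPath := Walk.IsPath.mk' (by rw [hw]; exact hnd)
  have hzlast : (a :: b :: t').getLast (List.cons_ne_nil _ _)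
      = (b :: t').getLast (List.cons_ne_nil _ _) :=
    List.getLast_cons (List.cons_ne_nil b t')
  have hzmem : (a :: b :: t').getLast (List.cons_ne_nil _ _) ∈ b :: t' :=
    hzlast ▸ List.getLast_mem _
  have ht'ne : t' ≠ [] := by
    intro h; subst h; simp at h3
  have hzt' : (a :: b :: t').getLast (List.cons_ne_nil _ _) ∈ t' := by
    rw [hzlast, List.getLast_cons ht'ne]
    exact List.getLast_mem _
  have hnotmem : s((a :: b :: t').getLast (List.cons_ne_nil _ _), a) ∉ w.edges := by
    apply CircAux.not_mem_edges_aux w hw hnd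
    · intro h
      have hna : a ∉ b :: t' := by
        have := hnd; rw [List.nodup_cons] at this; exact this.1
      exact hna (h ▸ hzmem)
    · intro h
      have hbt' : b ∉ t' := by
        have := hnd; rw [List.nodup_cons, List.nodup_cons] at this; exact this.2.1
      exact hbt' (h ▸ hzt')
  have hcyc : (Walk.cons hlast w).IsCycle := (Walk.cons_isCycle_iff w hlast).mpr ⟨hpath, hnotmem⟩
  have hlen : (Walk.cons hlast w).length = (a :: b :: t').length := by
    have h := w.length_support
    rw [hw] at h
    simp only [Walk.length_cons]
    simp at h ⊢
    omega
  calc G.egirth ≤ ((Walk.cons hlast w).length : ℕ∞) := by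
        apply iInf_le_of_le ((a :: b :: t').getLast (List.cons_ne_nil _ _))
        apply iInf_le_of_le (Walk.cons hlast w)
        exact iInf_le _ hcyc
    _ = _ := by rw [hlen]

/-- Rotating a cycle list yields a cycle list. -/
lemma CircAux.isCycleList_rotate {V : Type*} {G : SimpleGraph V} {l : List V}
    (hc : IsCycleList G l) (r : ℕ) : IsCycleList G (l.rotate r) := by
  obtain ⟨h2, hnd, hadj⟩ := hc
  have hlen : (l.rotate r).length = l.length := List.length_rotate l r
  refine ⟨by omega, List.nodup_rotate.mpr hnd, ?_⟩
  rintro ⟨iv, hiv⟩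
  have hn : 0 < l.length := by omega
  have key : ∀ j : ℕ, (hj : j < (l.rotate r).length) →
      (l.rotate r).get ⟨j, hj⟩ = l.get ⟨(j + r) % l.length, Nat.mod_lt _ hn⟩ := by
    intro j hj
    simp [List.get_eq_getElem, List.getElem_rotate]
  rw [key iv hiv, key _ _]
  have hidx : (((iv + 1) % (l.rotate r).length) + r) % l.length
      = (((iv + r) % l.length) + 1) % l.length := by
    rw [hlen, Nat.mod_add_mod, Nat.mod_add_mod]
    congr 1
    omega
  have h := hadj ⟨(iv + r) % l.length, Nat.mod_lt _ hn⟩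
  simp only [List.get_eq_getElem] at h ⊢
  simp only [hidx]
  exact h

lemma CircAux.chain_telescope {V : Type*} (f : V → ℤ) (q : ℤ) :
    ∀ (t : List V) (a : V), List.Chain (fun x y => f x + q ≤ f y) a t →
      f a + q * t.length ≤ f ((a :: t).getLast (List.cons_ne_nil a t)) := by
  intro t
  induction t with
  | nil => simp
  | cons b t' ih =>
    intro a hch
    simp only [List.Chain, List.chain_cons] at hch
    rw [List.getLast_cons (List.cons_ne_nil b t')]
    have h := ih b hch.2
    have h1 := hch.1
    simp only [List.length_cons]
    push_cast
    push_cast at h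
    linarith

/-- The key counting argument: a monotone cycle of length `n` in a `(p,q)`-coloured graph
forces `q * n ≤ p`. -/
lemma CircAux.key_count {V : Type*} [Fintype V] {G : SimpleGraph V} {p q : ℕ} (hq : 0 < q)
    {c : V → Fin p} (hcol : IsPQColoring G p q c) {σ : V ≃ Fin (Fintype.card V)}
    (hσ : ∀ x y : V, (σ x : ℕ) < (σ y : ℕ) → (c x : ℕ) ≤ (c y : ℕ))
    {l : List V} (hcyc : IsCycleList G l)
    (hch : ((l.map fun x => ((σ x : ℕ))).Chain' (· < ·))) :
    q * l.length ≤ p := by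
  have h2 := hcyc.1
  have hne : l ≠ [] := List.ne_nil_of_length_pos (by omega)
  have hQ : List.Chain' (fun x y : V => ((c x : ℕ) : ℤ) + (q : ℤ) ≤ ((c y : ℕ) : ℤ)) l := by
    have hadjch := CircAux.cycleList_chain' hcyc
    simp only [List.Chain', List.isChain_iff_getElem] at hadjch hch ⊢
    intro i hi
    have hlenm : (l.map fun x => ((σ x : ℕ))).length = l.length := by simp
    have hpos := hch i (by omega)
    simp only [List.get_eq_getElem, List.getElem_map] at hpos
    have hadj := hadjch i hi
    have hle : (c l[i] : ℕ) ≤ (c l[i+1] : ℕ) := hσ _ _ hpos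
    have habs := (hcol _ _ hadj).1
    rcases abs_cases (((c l[i] : ℕ) : ℤ) - ((c l[i+1] : ℕ) : ℤ)) with ⟨ha, hb⟩ | ⟨ha, hb⟩ <;>
      omega
  rcases l with - | ⟨a, t⟩
  · simp at h2
  have hchain : List.Chain (fun x y : V => ((c x : ℕ) : ℤ) + (q : ℤ) ≤ ((c y : ℕ) : ℤ)) a t := hQ
  have htel := CircAux.chain_telescope (fun v => ((c v : ℕ) : ℤ)) q t a hchain
  have hlastadj := CircAux.cycleList_last_adj hcyc (List.cons_ne_nil a t)
  have habs := (hcol _ _ hlastadj).2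
  have hhead : (a :: t).head (List.cons_ne_nil a t) = a := rfl
  rw [hhead] at habs
  simp only [List.length_cons]
  have hql : (0:ℤ) ≤ q * t.length := by positivity
  rcases abs_cases (((c ((a :: t).getLast (List.cons_ne_nil a t)) : ℕ) : ℤ) - ((c a : ℕ) : ℤ))
    with ⟨ha, hb⟩ | ⟨ha, hb⟩ <;>
  · push_cast at htel ⊢
    nlinarith [htel, habs, ha, hb]

/-- Any colouring admits a circular ordering of the vertices sorted by colour. -/
lemma CircAux.exists_sigma {V : Type*} [Fintype V] {p : ℕ} (c : V → Fin p) :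
    ∃ σ : V ≃ Fin (Fintype.card V),
      ∀ x y : V, (σ x : ℕ) < (σ y : ℕ) → (c x : ℕ) ≤ (c y : ℕ) := by
  classical
  let e := Fintype.equivFin V
  let f : V → Lex (Fin p × Fin (Fintype.card V)) := fun v => toLex (c v, e v)
  have hfinj : Function.Injective f := by
    intro x y hxy
    have : (c x, e x) = (c y, e y) := by
      simpa [f] using hxy
    exact e.injective (congrArg Prod.snd this)
  letI : LinearOrder V := LinearOrder.lift' f hfinj
  let ψ := (monoEquivOfFin V rfl).symm
  refine ⟨ψ.toEquiv, ?_⟩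
  intro x y hlt
  have h1 : ψ x < ψ y := by
    rw [Fin.lt_iff_val_lt_val]; exact hlt
  have hxy : x < y := ψ.lt_iff_lt.mp h1
  have hf : f x < f y := by
    rcases lt_iff_le_not_ge.mp hxy with ⟨hle, hnle⟩
    exact lt_of_le_not_ge hle (fun h => hnle h)
  rcases Prod.Lex.lt_iff.mp hf with h | ⟨h, -⟩
  · exact le_of_lt h
  · exact le_of_eq (congrArg Fin.val h)

/-- If `G` is a finite simple graph with `α∘(G) > 2`, then `χ_c(G) ≥ girth(G)`. -/
theorem girth_le_circChromNum {V : Type*} [Fintype V]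
    (G : SimpleGraph V) (h : 2 < circAltitude G) :
    G.egirth ≤ ((⌊circChromNum G⌋₊ : ℕ) : ℕ∞) := by
  classical
  set S : Set ℕ := {k | ∀ σ : V ≃ Fin (Fintype.card V), ∃ l : List V,
    IsMonotonicCycle G σ l ∧ k ≤ l.length} with hS
  have hbdd : BddAbove S := by
    refine ⟨Fintype.card V, fun k hk => ?_⟩
    obtain ⟨l, hl, hlen⟩ := hk (Fintype.equivFin V)
    exact hlen.trans (List.Nodup.length_le_card hl.1.2.1)
  have hSne : S.Nonempty := by
    by_contra hc
    rw [Set.not_nonempty_iff_eq_empty] at hc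
    rw [circAltitude, ← hS, hc] at h
    simp at h
  have hmem : circAltitude G ∈ S := Nat.sSup_mem hSne hbdd
  -- the colouring set
  set T : Set ℝ := {x : ℝ | ∃ p q : ℕ, 0 < p ∧ 0 < q ∧ x = (p : ℝ) / (q : ℝ) ∧
    ∃ c : V → Fin p, IsPQColoring G p q c} with hT
  -- G has a vertex (indeed a cycle), so egirth is finite
  obtain ⟨l₀, hl₀, hlen₀⟩ := hmem (Fintype.equivFin V)
  have h3₀ : 3 ≤ l₀.length := by omega
  have hfin : G.egirth ≠ ⊤ := by
    have := CircAux.egirth_le_of_cycleList G l₀ hl₀.1 h3₀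
    intro hcon
    rw [hcon] at this
    exact absurd (top_le_iff.mp this) (by simp)
  have hVne : Nonempty V := by
    rcases l₀ with - | ⟨a, t⟩
    · simp at h3₀
    · exact ⟨a⟩
  have hcard : 0 < Fintype.card V := Fintype.card_pos
  have hTne : T.Nonempty := by
    refine ⟨(Fintype.card V : ℝ) / (1 : ℕ), Fintype.card V, 1, hcard, one_pos, by norm_num, ?_⟩
    refine ⟨fun v => Fintype.equivFin V v, fun a b hab => ?_⟩
    have hne : Fintype.equivFin V a ≠ Fintype.equivFin V b :=
      fun hc => G.ne_of_adj hab ((Fintype.equivFin V).injective hc)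
    have hne' : (Fintype.equivFin V a : ℕ) ≠ (Fintype.equivFin V b : ℕ) :=
      fun hc => hne (Fin.ext hc)
    have hlt1 : (Fintype.equivFin V a : ℕ) < Fintype.card V := (Fintype.equivFin V a).isLt
    have hlt2 : (Fintype.equivFin V b : ℕ) < Fintype.card V := (Fintype.equivFin V b).isLt
    dsimp only
    constructor <;>
    · rcases abs_cases (((Fintype.equivFin V a : ℕ) : ℤ) - ((Fintype.equivFin V b : ℕ) : ℤ))
        with ⟨h1, h2⟩ | ⟨h1, h2⟩ <;> omega
  set g : ℕ := G.egirth.toNat with hg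
  have hlb : ∀ x ∈ T, (g : ℝ) ≤ x := by
    rintro x ⟨p, q, hp, hq, rfl, c, hcol⟩
    obtain ⟨σ, hσ⟩ := CircAux.exists_sigma c
    obtain ⟨l, ⟨hcyc, r, hch⟩, hlen⟩ := hmem σ
    have h3 : 3 ≤ l.length := by omega
    have hcyc' : IsCycleList G (l.rotate r) := CircAux.isCycleList_rotate hcyc r
    have hcount : q * (l.rotate r).length ≤ p := CircAux.key_count hq hcol hσ hcyc' hch
    rw [List.length_rotate] at hcount
    have hegirth : G.egirth ≤ (l.length : ℕ∞) := CircAux.egirth_le_of_cycleList G l hcyc h3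
    have hgle : g ≤ l.length := by
      have : (g : ℕ∞) ≤ (l.length : ℕ∞) := by
        rw [hg, ENat.coe_toNat hfin]
        exact hegirth
      exact_mod_cast this
    have hqg : q * g ≤ p := le_trans (Nat.mul_le_mul_left q hgle) hcount
    rw [le_div_iff₀ (by exact_mod_cast hq : (0:ℝ) < (q:ℝ))]
    have : ((q * g : ℕ) : ℝ) ≤ (p : ℝ) := by exact_mod_cast hqg
    push_cast at this
    linarith
  have hglb : (g : ℝ) ≤ circChromNum G := by
    rw [circChromNum, ← hT]
    exact le_csInf hTne hlb
  have hfloor : g ≤ ⌊circChromNum G⌋₊ := Nat.le_floor hglb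
  calc G.egirth = (g : ℕ∞) := (ENat.coe_toNat hfin).symm
    _ ≤ ((⌊circChromNum G⌋₊ : ℕ) : ℕ∞) := by exact_mod_cast hfloor
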